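/- Let φ be a lower semi-frame of H with dense analysis domain and generalized frame operator T = C_φ*C_φ. Then for every f in H, ∫_X |⟨f, T^{-1/2}φ_x⟩|² dμ(x) = ‖f‖², i.e., T^{-1/2}φ is a Parseval continuous frame of H (where ⟨f, T^{-1/2}φ_x⟩ is interpreted as ⟨T^{-1/2}f, φ_x⟩). -/

import Mathlib

open MeasureTheory
open scoped ENNReal NNReal

local notation "⟪" x ", " y "⟫" => @inner ℂ _ _ x y

/-- A densely defined operator `T` is self-adjoint: symmetric, and every weak-adjoint pair
belongs to its graph. -/
def IsSelfAdjointPMap {H : Type*} [NormedAddCommGroup H] [InnerProductSpace ℂ H]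
    (T : H →ₗ.[ℂ] H) : Prop :=
  Dense (T.domain : Set H) ∧
  (∀ f g : T.domain, ⟪T f, (g : H)⟫ = ⟪(f : H), T g⟫) ∧
  (∀ g h : H, (∀ f : T.domain, ⟪T f, g⟫ = ⟪(f : H), h⟫) →
    ∃ hg : g ∈ T.domain, T ⟨g, hg⟩ = h)

/-- for a lower semi-frame `φ` with dense analysis domain and generalized
frame operator `T = C*C` (self-adjoint, realizing `Ω(f,g) = ∫ ⟨f,φ_x⟩⟨φ_x,g⟩ dμ`), with
bounded inverse `T⁻¹` and positive self-adjoint square root `T^{-1/2}` of `T⁻¹`, the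
function `T^{-1/2}φ` is a Parseval continuous frame:
`∫ |⟨T^{-1/2}f, φ_x⟩|² dμ = ‖f‖²` for every `f ∈ H`. -/
theorem stmt9 {H X : Type*}
    [NormedAddCommGroup H] [InnerProductSpace ℂ H] [CompleteSpace H]
    [MeasurableSpace X] (μ : Measure X) (φ : X → H)
    (hwm : ∀ f : H, AEStronglyMeasurable (fun x => ⟪f, φ x⟫) μ)
    (m : ℝ) (hm : 0 < m)
    (hlow : ∀ f : H,
      ENNReal.ofReal (m * ‖f‖ ^ 2) ≤ ∫⁻ x, (‖⟪f, φ x⟫‖₊ : ℝ≥0∞) ^ 2 ∂μ)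
    (hdense : Dense {f : H | ∫⁻ x, (‖⟪f, φ x⟫‖₊ : ℝ≥0∞) ^ 2 ∂μ < ∞})
    (T : H →ₗ.[ℂ] H) (hsa : IsSelfAdjointPMap T)
    (hTdom : ∀ f : T.domain, ∫⁻ x, (‖⟪(f : H), φ x⟫‖₊ : ℝ≥0∞) ^ 2 ∂μ < ∞)
    (hT : ∀ (f : T.domain) (g : H), ∫⁻ x, (‖⟪g, φ x⟫‖₊ : ℝ≥0∞) ^ 2 ∂μ < ∞ →
      ⟪T f, g⟫ = ∫ x, ⟪(f : H), φ x⟫ * ⟪φ x, g⟫ ∂μ)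
    (Tinv : H →L[ℂ] H)
    (hmem : ∀ g : H, Tinv g ∈ T.domain)
    (hright : ∀ g : H, T ⟨Tinv g, hmem g⟩ = g)
    (hleft : ∀ f : T.domain, Tinv (T f) = (f : H))
    (Tinvhalf : H →L[ℂ] H) (hsahalf : IsSelfAdjoint Tinvhalf)
    (hposhalf : ∀ f : H, 0 ≤ (⟪Tinvhalf f, f⟫).re)
    (hsqr : ∀ f : H, Tinvhalf (Tinvhalf f) = Tinv f) :
    ∀ f : H,
      ∫⁻ x, (‖⟪Tinvhalf f, φ x⟫‖₊ : ℝ≥0∞) ^ 2 ∂μ = ENNReal.ofReal (‖f‖ ^ 2) := by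
  classical
  -- self-adjointness of `Tinvhalf` as an inner-product identity
  have hadj : ∀ x y : H, ⟪x, Tinvhalf y⟫ = ⟪Tinvhalf x, y⟫ := by
    intro x y
    conv_lhs => rw [← hsahalf.adjoint_eq]
    exact ContinuousLinearMap.adjoint_inner_right Tinvhalf x y
  -- `Tinvhalf` is injective
  have hinj : ∀ g : H, Tinvhalf g = 0 → g = 0 := by
    intro g hg
    have h0 : Tinv g = 0 := by rw [← hsqr, hg, map_zero]
    have h1 := hright g
    have hz : (⟨Tinv g, hmem g⟩ : T.domain) = 0 := Subtype.ext h0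
    rw [hz] at h1
    simpa using h1.symm
  -- the range of `Tinvhalf` is dense
  have hdr : Dense ((LinearMap.range (Tinvhalf : H →ₗ[ℂ] H) : Submodule ℂ H) : Set H) := by
    rw [Submodule.dense_iff_topologicalClosure_eq_top,
      Submodule.topologicalClosure_eq_top_iff, Submodule.eq_bot_iff]
    intro g hg
    apply hinj
    rw [← @inner_self_eq_zero ℂ]
    have h1 : ⟪Tinvhalf g, Tinvhalf g⟫ = ⟪Tinvhalf (Tinvhalf g), g⟫ := hadj (Tinvhalf g) g
    rw [h1]
    exact hg (Tinvhalf (Tinvhalf g)) (LinearMap.mem_range.mpr ⟨Tinvhalf g, rfl⟩)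
  -- rpow bookkeeping
  have hrw : ∀ y : ℝ≥0∞, y ^ (2 : ℕ) = y ^ (2 : ℝ) := fun y => by
    rw [← ENNReal.rpow_natCast]; norm_num
  have hsqrt : ∀ y : ℝ≥0∞, (y ^ (2 : ℕ)) ^ (1 / 2 : ℝ) = y := fun y => by
    rw [← ENNReal.rpow_natCast, ← ENNReal.rpow_mul]; norm_num
  have hsq : ∀ y : ℝ≥0∞, (y ^ (1 / 2 : ℝ)) ^ (2 : ℕ) = y := fun y => by
    rw [← ENNReal.rpow_natCast, ← ENNReal.rpow_mul]; norm_num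
  -- KEY: Parseval identity on the range of `Tinvhalf`
  have key : ∀ u : H, ∫⁻ x, (‖⟪Tinv u, φ x⟫‖₊ : ℝ≥0∞) ^ 2 ∂μ
      = ENNReal.ofReal (‖Tinvhalf u‖ ^ 2) := by
    intro u
    have hfin : ∫⁻ x, (‖⟪Tinv u, φ x⟫‖₊ : ℝ≥0∞) ^ 2 ∂μ < ∞ := hTdom ⟨Tinv u, hmem u⟩
    have hTa := hT ⟨Tinv u, hmem u⟩ (Tinv u) hfin
    rw [hright u] at hTa
    have hpt : ∀ x, ⟪Tinv u, φ x⟫ * ⟪φ x, Tinv u⟫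
        = ((‖⟪Tinv u, φ x⟫‖ ^ 2 : ℝ) : ℂ) := by
      intro x
      have h : ⟪φ x, Tinv u⟫ = (starRingEnd ℂ) ⟪Tinv u, φ x⟫ :=
        (inner_conj_symm (φ x) (Tinv u)).symm
      rw [h, Complex.mul_conj, Complex.normSq_eq_norm_sq]
    simp only [hpt] at hTa
    have h5 : ∫ x, ((‖⟪Tinv u, φ x⟫‖ ^ 2 : ℝ) : ℂ) ∂μ
        = (((∫ x, ‖⟪Tinv u, φ x⟫‖ ^ 2 ∂μ) : ℝ) : ℂ) := integral_ofReal
    rw [h5] at hTa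
    have hu : ⟪u, Tinv u⟫ = ((‖Tinvhalf u‖ ^ 2 : ℝ) : ℂ) := by
      rw [← hsqr u, hadj, inner_self_eq_norm_sq_to_K]
      norm_cast
    rw [hu] at hTa
    have hre : (‖Tinvhalf u‖ ^ 2 : ℝ) = ∫ x, ‖⟪Tinv u, φ x⟫‖ ^ 2 ∂μ := by
      exact_mod_cast hTa
    have hmeas : AEStronglyMeasurable (fun x => ‖⟪Tinv u, φ x⟫‖ ^ 2) μ := by
      have h := (hwm (Tinv u)).norm
      exact h.pow 2
    have hint : Integrable (fun x => ‖⟪Tinv u, φ x⟫‖ ^ 2) μ := by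
      refine ⟨hmeas, ?_⟩
      simp only [HasFiniteIntegral, enorm_eq_nnnorm, nnnorm_pow, nnnorm_norm, ENNReal.coe_pow]
      exact hfin
    rw [hre, ofReal_integral_eq_lintegral_ofReal hint
      (Filter.Eventually.of_forall fun x => sq_nonneg _)]
    congr 1
    ext x
    rw [ENNReal.ofReal_pow (norm_nonneg _), ofReal_norm, enorm_eq_nnnorm]
  -- Minkowski inequality for the analysis map
  have hmink : ∀ a b : H,
      (∫⁻ x, (‖⟪a + b, φ x⟫‖₊ : ℝ≥0∞) ^ 2 ∂μ) ^ (1 / 2 : ℝ) ≤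
      (∫⁻ x, (‖⟪a, φ x⟫‖₊ : ℝ≥0∞) ^ 2 ∂μ) ^ (1 / 2 : ℝ) +
      (∫⁻ x, (‖⟪b, φ x⟫‖₊ : ℝ≥0∞) ^ 2 ∂μ) ^ (1 / 2 : ℝ) := by
    intro a b
    have hma : AEMeasurable (fun x => (‖⟪a, φ x⟫‖₊ : ℝ≥0∞)) μ := (hwm a).enorm
    have hmb : AEMeasurable (fun x => (‖⟪b, φ x⟫‖₊ : ℝ≥0∞)) μ := (hwm b).enorm
    have hstep : ∀ x, (‖⟪a + b, φ x⟫‖₊ : ℝ≥0∞) ^ (2 : ℕ)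
        ≤ ((‖⟪a, φ x⟫‖₊ : ℝ≥0∞) + (‖⟪b, φ x⟫‖₊ : ℝ≥0∞)) ^ (2 : ℕ) := by
      intro x
      refine pow_le_pow_left₀ (zero_le) ?_ 2
      have : ⟪a + b, φ x⟫ = ⟪a, φ x⟫ + ⟪b, φ x⟫ := inner_add_left _ _ _
      rw [this]
      exact_mod_cast ENNReal.coe_le_coe.mpr (nnnorm_add_le _ _)
    calc (∫⁻ x, (‖⟪a + b, φ x⟫‖₊ : ℝ≥0∞) ^ 2 ∂μ) ^ (1 / 2 : ℝ)
        ≤ (∫⁻ x, ((‖⟪a, φ x⟫‖₊ : ℝ≥0∞) + (‖⟪b, φ x⟫‖₊ : ℝ≥0∞)) ^ 2 ∂μ) ^ (1 / 2 : ℝ) := by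
          exact ENNReal.rpow_le_rpow (lintegral_mono fun x => hstep x) (by norm_num)
      _ ≤ (∫⁻ x, (‖⟪a, φ x⟫‖₊ : ℝ≥0∞) ^ 2 ∂μ) ^ (1 / 2 : ℝ) +
          (∫⁻ x, (‖⟪b, φ x⟫‖₊ : ℝ≥0∞) ^ 2 ∂μ) ^ (1 / 2 : ℝ) := by
          simp only [hrw]
          exact ENNReal.lintegral_Lp_add_le hma hmb one_le_two
  -- Fatou: upper bound for all f
  have hupper : ∀ f : H, ∫⁻ x, (‖⟪Tinvhalf f, φ x⟫‖₊ : ℝ≥0∞) ^ 2 ∂μ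
      ≤ ENNReal.ofReal (‖f‖ ^ 2) := by
    intro f
    obtain ⟨g, hgmem, hgtend⟩ := mem_closure_iff_seq_limit.mp (hdr f)
    choose u hu using fun n => LinearMap.mem_range.mp (hgmem n)
    simp only [ContinuousLinearMap.coe_coe] at hu
    have hpt : ∀ x, Filter.Tendsto
        (fun n => (‖⟪Tinvhalf (g n), φ x⟫‖₊ : ℝ≥0∞) ^ 2) Filter.atTop
        (nhds ((‖⟪Tinvhalf f, φ x⟫‖₊ : ℝ≥0∞) ^ 2)) := by
      intro x
      have h1 : Filter.Tendsto (fun n => Tinvhalf (g n)) Filter.atTop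
          (nhds (Tinvhalf f)) := (Tinvhalf.continuous.tendsto f).comp hgtend
      have h2 : Filter.Tendsto (fun n => ⟪Tinvhalf (g n), φ x⟫) Filter.atTop
          (nhds ⟪Tinvhalf f, φ x⟫) := h1.inner tendsto_const_nhds
      have h3 : Filter.Tendsto (fun n => (‖⟪Tinvhalf (g n), φ x⟫‖₊ : ℝ≥0∞))
          Filter.atTop (nhds (‖⟪Tinvhalf f, φ x⟫‖₊ : ℝ≥0∞)) :=
        (ENNReal.tendsto_coe.mpr h2.nnnorm)
      exact ((ENNReal.continuous_pow 2).tendsto _).comp h3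
    calc ∫⁻ x, (‖⟪Tinvhalf f, φ x⟫‖₊ : ℝ≥0∞) ^ 2 ∂μ
        = ∫⁻ x, Filter.liminf
            (fun n => (‖⟪Tinvhalf (g n), φ x⟫‖₊ : ℝ≥0∞) ^ 2) Filter.atTop ∂μ := by
          congr 1; ext x; exact ((hpt x).liminf_eq).symm
      _ ≤ Filter.liminf
            (fun n => ∫⁻ x, (‖⟪Tinvhalf (g n), φ x⟫‖₊ : ℝ≥0∞) ^ 2 ∂μ)
            Filter.atTop :=
          lintegral_liminf_le' fun n => (hwm _).enorm.pow_const 2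
      _ = Filter.liminf (fun n => ENNReal.ofReal (‖g n‖ ^ 2)) Filter.atTop := by
          congr 1; ext n
          rw [← hu n, hsqr]
          exact key (u n)
      _ = ENNReal.ofReal (‖f‖ ^ 2) := by
          have ht : Filter.Tendsto (fun n => ENNReal.ofReal (‖g n‖ ^ 2)) Filter.atTop
              (nhds (ENNReal.ofReal (‖f‖ ^ 2))) :=
            (ENNReal.continuous_ofReal.tendsto _).comp ((hgtend.norm).pow 2)
          exact ht.liminf_eq
  -- conclusion
  intro f
  refine le_antisymm (hupper f) ?_
  have hlow2 : ENNReal.ofReal ‖f‖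
      ≤ (∫⁻ x, (‖⟪Tinvhalf f, φ x⟫‖₊ : ℝ≥0∞) ^ 2 ∂μ) ^ (1 / 2 : ℝ) := by
    apply ENNReal.le_of_forall_pos_le_add
    intro ε hε _
    have hε2 : (0 : ℝ) < (ε : ℝ) / 2 := by positivity
    obtain ⟨y, hy, hyd⟩ := hdr.exists_dist_lt f hε2
    obtain ⟨u, huy⟩ := LinearMap.mem_range.mp hy
    rw [ContinuousLinearMap.coe_coe] at huy
    have hnorm : ‖f - Tinvhalf u‖ < (ε : ℝ) / 2 := by
      rw [huy]
      rw [dist_eq_norm] at hyd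
      exact hyd
    -- Minkowski split : Tinv u = Tinvhalf f + Tinvhalf (Tinvhalf u - f)
    have hsplit : Tinv u = Tinvhalf f + Tinvhalf (Tinvhalf u - f) := by
      rw [← hsqr u, ← map_add]
      congr 1
      abel
    have h1 : ENNReal.ofReal ‖Tinvhalf u‖
        = (∫⁻ x, (‖⟪Tinv u, φ x⟫‖₊ : ℝ≥0∞) ^ 2 ∂μ) ^ (1 / 2 : ℝ) := by
      rw [key u, ENNReal.ofReal_pow (norm_nonneg _), hsqrt]
    have h2 : (∫⁻ x, (‖⟪Tinv u, φ x⟫‖₊ : ℝ≥0∞) ^ 2 ∂μ) ^ (1 / 2 : ℝ)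
        ≤ (∫⁻ x, (‖⟪Tinvhalf f, φ x⟫‖₊ : ℝ≥0∞) ^ 2 ∂μ) ^ (1 / 2 : ℝ) +
          (∫⁻ x, (‖⟪Tinvhalf (Tinvhalf u - f), φ x⟫‖₊ : ℝ≥0∞) ^ 2 ∂μ) ^ (1 / 2 : ℝ) := by
      rw [hsplit]
      exact hmink _ _
    have h3 : (∫⁻ x, (‖⟪Tinvhalf (Tinvhalf u - f), φ x⟫‖₊ : ℝ≥0∞) ^ 2 ∂μ) ^ (1 / 2 : ℝ)
        ≤ ENNReal.ofReal ((ε : ℝ) / 2) := by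
      calc (∫⁻ x, (‖⟪Tinvhalf (Tinvhalf u - f), φ x⟫‖₊ : ℝ≥0∞) ^ 2 ∂μ) ^ (1 / 2 : ℝ)
          ≤ (ENNReal.ofReal (‖Tinvhalf u - f‖ ^ 2)) ^ (1 / 2 : ℝ) :=
            ENNReal.rpow_le_rpow (hupper _) (by norm_num)
        _ = ENNReal.ofReal ‖Tinvhalf u - f‖ := by
            rw [ENNReal.ofReal_pow (norm_nonneg _), hsqrt]
        _ ≤ ENNReal.ofReal ((ε : ℝ) / 2) := by
            apply ENNReal.ofReal_le_ofReal
            rw [norm_sub_rev]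
            exact le_of_lt hnorm
    have h4 : ‖f‖ ≤ ‖Tinvhalf u‖ + (ε : ℝ) / 2 := by
      have := norm_sub_norm_le f (Tinvhalf u)
      linarith [hnorm, this]
    calc ENNReal.ofReal ‖f‖
        ≤ ENNReal.ofReal (‖Tinvhalf u‖ + (ε : ℝ) / 2) := ENNReal.ofReal_le_ofReal h4
      _ = ENNReal.ofReal ‖Tinvhalf u‖ + ENNReal.ofReal ((ε : ℝ) / 2) := by
          rw [ENNReal.ofReal_add (norm_nonneg _) (le_of_lt hε2)]
      _ ≤ ((∫⁻ x, (‖⟪Tinvhalf f, φ x⟫‖₊ : ℝ≥0∞) ^ 2 ∂μ) ^ (1 / 2 : ℝ) +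
            ENNReal.ofReal ((ε : ℝ) / 2)) + ENNReal.ofReal ((ε : ℝ) / 2) := by
          gcongr
          calc ENNReal.ofReal ‖Tinvhalf u‖
              ≤ (∫⁻ x, (‖⟪Tinvhalf f, φ x⟫‖₊ : ℝ≥0∞) ^ 2 ∂μ) ^ (1 / 2 : ℝ) +
                (∫⁻ x, (‖⟪Tinvhalf (Tinvhalf u - f), φ x⟫‖₊ : ℝ≥0∞) ^ 2 ∂μ) ^ (1 / 2 : ℝ) := by
                rw [h1]; exact h2
            _ ≤ (∫⁻ x, (‖⟪Tinvhalf f, φ x⟫‖₊ : ℝ≥0∞) ^ 2 ∂μ) ^ (1 / 2 : ℝ) +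
                ENNReal.ofReal ((ε : ℝ) / 2) := by gcongr
      _ = (∫⁻ x, (‖⟪Tinvhalf f, φ x⟫‖₊ : ℝ≥0∞) ^ 2 ∂μ) ^ (1 / 2 : ℝ) + ↑ε := by
          rw [add_assoc, ← ENNReal.ofReal_add (le_of_lt hε2) (le_of_lt hε2),
            add_halves, ENNReal.ofReal_coe_nnreal]
  have := pow_le_pow_left₀ (zero_le) hlow2 2
  rw [hsq] at this
  calc ENNReal.ofReal (‖f‖ ^ 2)
      = (ENNReal.ofReal ‖f‖) ^ 2 := ENNReal.ofReal_pow (norm_nonneg _) 2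
    _ ≤ _ := this
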